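/- For every g ∈ GU(V,H) with similitude factor ν(g), one has L ∘ ⋀²g = (ν(g)²·(det g)^{-1}) · (⋀²g ∘ L) as maps ⋀²V → ⋀²V; that is, L((⋀²g)(x)) = (ν(g)²/det g)·(⋀²g)(L(x)) for all x ∈ ⋀²V. -/

import Mathlib

/-- The canonical generator `v₁ ∧ ⋯ ∧ vₙ` of the `n`-th exterior power, as an element of the
submodule `⋀[E]^n V` of the exterior algebra. -/
noncomputable def wedgeι (E : Type*) [CommRing E] {V : Type*} [AddCommGroup V] [Module E V]
    (n : ℕ) (v : Fin n → V) : ⋀[E]^n V :=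
  ⟨ExteriorAlgebra.ιMulti E n v, ExteriorAlgebra.ιMulti_range E n (Set.mem_range_self v)⟩

/-- The wedge (exterior) product `⋀²V × ⋀²V → ⋀⁴V`. -/
noncomputable def wedgeMul (E : Type*) [CommRing E] {V : Type*} [AddCommGroup V] [Module E V]
    (x y : ⋀[E]^2 V) : ⋀[E]^4 V :=
  ⟨(x : ExteriorAlgebra E V) * (y : ExteriorAlgebra E V), by
    have h := Submodule.mul_mem_mul x.2 y.2
    have e : (⋀[E]^2 V) * (⋀[E]^2 V) = ⋀[E]^4 V := by
      show LinearMap.range (ExteriorAlgebra.ι E (M := V)) ^ 2 *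
          LinearMap.range (ExteriorAlgebra.ι E (M := V)) ^ 2
        = LinearMap.range (ExteriorAlgebra.ι E (M := V)) ^ 4
      rw [← pow_add]
    exact e ▸ h⟩

/-- `h` is a form on `⋀^r V`, additive in each variable, `ρ`-sesquilinear, conjugate-symmetric,
whose value on decomposable wedges is the determinant `det (H (v i) (w j))`. -/
def IsDetForm {E : Type*} [Field E] (ρ : E →+* E)
    {V : Type*} [AddCommGroup V] [Module E V] (H : V → V → E) (r : ℕ)
    (h : (⋀[E]^r V) → (⋀[E]^r V) → E) : Prop :=
  (∀ x y z, h (x + y) z = h x z + h y z) ∧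
  (∀ x y z, h x (y + z) = h x y + h x z) ∧
  (∀ (a b : E) (x y : ⋀[E]^r V), h (a • x) (b • y) = ρ a * h x y * b) ∧
  (∀ x y, h x y = ρ (h y x)) ∧
  (∀ v w : Fin r → V,
    h (wedgeι E r v) (wedgeι E r w) = (Matrix.of fun i j => H (v i) (w j)).det)


section Aux

variable {E : Type*} [Field E] {V : Type*} [AddCommGroup V] [Module E V]

/-- Induction principle for elements of exterior powers. -/
theorem wedge_ind (n : ℕ) {p : (⋀[E]^n V) → Prop} (h0 : p 0)
    (hadd : ∀ x y, p x → p y → p (x + y))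
    (hsmul : ∀ (a : E) (x), p x → p (a • x))
    (hgen : ∀ v : Fin n → V, p (wedgeι E n v)) (x : ⋀[E]^n V) : p x := by
  obtain ⟨x, hx⟩ := x
  have hs := ExteriorAlgebra.ιMulti_span_fixedDegree E n (M := V)
  have hx' : x ∈ Submodule.span E (Set.range (ExteriorAlgebra.ιMulti E n (M := V))) := by
    rw [hs]; exact hx
  have main : ∀ (a) (_ : a ∈ Submodule.span E
      (Set.range (ExteriorAlgebra.ιMulti E n (M := V)))),
      ∀ (h : a ∈ ⋀[E]^n V), p ⟨a, h⟩ := by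
    intro a ha
    induction ha using Submodule.span_induction with
    | mem a hmem =>
      intro h
      obtain ⟨v, rfl⟩ := hmem
      exact hgen v
    | zero => intro _; exact h0
    | add a b ha hb iha ihb =>
      intro h
      have ha' : a ∈ ⋀[E]^n V := by rw [← hs]; exact ha
      have hb' : b ∈ ⋀[E]^n V := by rw [← hs]; exact hb
      exact hadd ⟨a, ha'⟩ ⟨b, hb'⟩ (iha ha') (ihb hb')
    | smul c a ha iha =>
      intro h
      have ha' : a ∈ ⋀[E]^n V := by rw [← hs]; exact ha
      exact hsmul c ⟨a, ha'⟩ (iha ha')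
  exact main x hx' hx

/-- Expansion of a module-valued alternating map in terms of a basis determinant. -/
theorem alt_expand {A : Type*} [AddCommGroup A] [Module E A] {n : ℕ}
    (b : Module.Basis (Fin n) E V) (f : V [⋀^Fin n]→ₗ[E] A) (u : Fin n → V) :
    f u = b.det u • f ⇑b := by
  have key : f = (LinearMap.toSpanSingleton E A (f ⇑b)).compAlternatingMap b.det := by
    refine Module.Basis.ext_alternating b fun i hinj => ?_
    let σ : Equiv.Perm (Fin n) := Equiv.ofBijective i (Finite.injective_iff_bijective.1 hinj)
    have hbσ : (fun k => b (i k)) = ⇑b ∘ ⇑σ := rfl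
    rw [hbσ, AlternatingMap.map_perm]
    show _ = LinearMap.toSpanSingleton E A (f ⇑b) (b.det (⇑b ∘ ⇑σ))
    rw [AlternatingMap.map_perm, Module.Basis.det_self]
    simp [LinearMap.toSpanSingleton_apply, Units.smul_def, zsmul_one, Int.cast_smul_eq_zsmul]
  conv_lhs => rw [key]
  rfl

/-- The product of two `ιMulti 2`'s is an `ιMulti 4` of the appended family. -/
theorem iMulti_two_mul (v w : Fin 2 → V) :
    (ExteriorAlgebra.ιMulti E 2 v : ExteriorAlgebra E V) * ExteriorAlgebra.ιMulti E 2 w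
      = ExteriorAlgebra.ιMulti E 4 (Fin.append v w) := by
  have : (fun i => ExteriorAlgebra.ι E (Fin.append v w i))
      = Fin.append (fun i => ExteriorAlgebra.ι E (v i)) (fun i => ExteriorAlgebra.ι E (w i)) := by
    funext i
    refine Fin.addCases (fun j => ?_) (fun j => ?_) i <;>
      simp only [Fin.append_left, Fin.append_right]
  rw [ExteriorAlgebra.ιMulti_apply, ExteriorAlgebra.ιMulti_apply, ExteriorAlgebra.ιMulti_apply,
    ← List.prod_append, show (List.ofFn fun i => ExteriorAlgebra.ι E (Fin.append v w i)) =
      List.ofFn (Fin.append (fun i => ExteriorAlgebra.ι E (v i))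
        (fun i => ExteriorAlgebra.ι E (w i))) from congrArg _ this, List.ofFn_fin_append]


theorem map_top_pow (b : Module.Basis (Fin 4) E V) (f : V →ₗ[E] V) (u : Fin 4 → V) :
    (ExteriorAlgebra.ιMulti E 4 (⇑f ∘ u) : ExteriorAlgebra E V)
      = LinearMap.det f • ExteriorAlgebra.ιMulti E 4 u := by
  rw [alt_expand b _ (⇑f ∘ u), alt_expand b (ExteriorAlgebra.ιMulti E 4) u,
    Module.Basis.det_comp, mul_smul]

/-- Every element of `⋀²V` lies in the span of the six basic wedges. -/
theorem span_pairs (b : Module.Basis (Fin 4) E V) (z : ExteriorAlgebra E V) (hz : z ∈ ⋀[E]^2 V) :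
    z ∈ Submodule.span E (Set.range fun q : {p : Fin 4 × Fin 4 // p.1 < p.2} =>
      (ExteriorAlgebra.ιMulti E 2 ![b q.1.1, b q.1.2] : ExteriorAlgebra E V)) := by
  rw [← ExteriorAlgebra.ιMulti_span_fixedDegree] at hz
  refine Submodule.span_le.2 ?_ hz
  rintro _ ⟨v, rfl⟩
  have hexp : ExteriorAlgebra.ιMulti E 2 v
      = ∑ r : Fin 2 → Fin 4, (∏ i, b.repr (v i) (r i)) •
          ExteriorAlgebra.ιMulti E 2 (fun i => b (r i)) := by
    have h1 : v = fun i => ∑ j : Fin 4, b.repr (v i) j • b j := by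
      funext i; exact (b.sum_repr (v i)).symm
    calc ExteriorAlgebra.ιMulti E 2 v
        = (ExteriorAlgebra.ιMulti E 2 (M := V)).toMultilinearMap
            (fun i => ∑ j : Fin 4, b.repr (v i) j • b j) := by rw [← h1]; rfl
      _ = ∑ r : Fin 2 → Fin 4, (ExteriorAlgebra.ιMulti E 2 (M := V)).toMultilinearMap
            (fun i => b.repr (v i) (r i) • b (r i)) :=
          MultilinearMap.map_sum _ _
      _ = _ := by
          refine Finset.sum_congr rfl fun r _ => ?_
          rw [MultilinearMap.map_smul_univ]
          rfl
  rw [hexp]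
  refine Submodule.sum_mem _ fun r _ => Submodule.smul_mem _ _ ?_
  rcases lt_trichotomy (r 0) (r 1) with h | h | h
  · have hcv : (fun i : Fin 2 => b (r i)) = ![b (r 0), b (r 1)] := by
      funext i; fin_cases i <;> rfl
    rw [hcv]
    exact Submodule.subset_span ⟨⟨(r 0, r 1), h⟩, rfl⟩
  · have : ExteriorAlgebra.ιMulti E 2 (fun i => b (r i)) = 0 :=
      AlternatingMap.map_eq_zero_of_eq _ _ (by rw [h]) (by decide : (0 : Fin 2) ≠ 1)
    rw [this]; exact Submodule.zero_mem _
  · have hc : (fun i => b (r i)) = (![b (r 1), b (r 0)]) ∘ ⇑(Equiv.swap (0 : Fin 2) 1) := by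
      funext i
      fin_cases i <;> simp [Equiv.swap_apply_left, Equiv.swap_apply_right]
    rw [hc, AlternatingMap.map_swap _ _ (by decide : (0 : Fin 2) ≠ 1)]
    exact Submodule.neg_mem _ (Submodule.subset_span ⟨⟨(r 1, r 0), h⟩, rfl⟩)

/-- The wedge pairing on `⋀²V` is nondegenerate (dim V = 4). -/
theorem wedge_pairing_nondeg (b : Module.Basis (Fin 4) E V)
    (hvol : (ExteriorAlgebra.ιMulti E 4 ⇑b : ExteriorAlgebra E V) ≠ 0)
    (z : ExteriorAlgebra E V) (hz : z ∈ ⋀[E]^2 V)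
    (h0 : ∀ v : Fin 2 → V, z * ExteriorAlgebra.ιMulti E 2 v = 0) : z = 0 := by
  classical
  set W : {p : Fin 4 × Fin 4 // p.1 < p.2} → ExteriorAlgebra E V :=
    fun q => ExteriorAlgebra.ιMulti E 2 ![b q.1.1, b q.1.2] with hW
  obtain ⟨c, hc⟩ := Finsupp.mem_span_range_iff_exists_finsupp.mp (span_pairs b z hz)
  have key : ∀ q0 : {p : Fin 4 × Fin 4 // p.1 < p.2}, ∃ t : {p : Fin 4 × Fin 4 // p.1 < p.2},
      Function.Bijective ![q0.1.1, q0.1.2, t.1.1, t.1.2] ∧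
      ∀ q : {p : Fin 4 × Fin 4 // p.1 < p.2}, q ≠ q0 →
        ¬ Function.Injective ![q.1.1, q.1.2, t.1.1, t.1.2] := by decide
  have happ : ∀ q t : {p : Fin 4 × Fin 4 // p.1 < p.2},
      W q * W t = ExteriorAlgebra.ιMulti E 4
        (fun i => b (![q.1.1, q.1.2, t.1.1, t.1.2] i)) := by
    intro q t
    rw [hW, iMulti_two_mul]
    congr 1
    funext i
    fin_cases i <;> rfl
  have hcq : ∀ q0, c q0 = 0 := by
    intro q0
    obtain ⟨t, htb, hto⟩ := key q0
    have hz0 : z * W t = 0 := h0 _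
    rw [← hc] at hz0
    rw [Finsupp.sum, Finset.sum_mul] at hz0
    have hsum : ∀ q ∈ c.support, q ≠ q0 → c q • W q * W t = 0 := by
      intro q _ hq
      rw [smul_mul_assoc, happ]
      rw [AlternatingMap.map_eq_zero_of_not_injective _ _ ?_, smul_zero]
      intro hinj
      exact hto q hq fun a a' haa => hinj (congrArg b haa)
    by_cases hmem : q0 ∈ c.support
    · rw [Finset.sum_eq_single q0 hsum (fun h => absurd hmem h)] at hz0
      rw [smul_mul_assoc, happ] at hz0
      set σ : Equiv.Perm (Fin 4) :=
        Equiv.ofBijective ![q0.1.1, q0.1.2, t.1.1, t.1.2] htb with hσ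
      have hps : (fun i => b (![q0.1.1, q0.1.2, t.1.1, t.1.2] i)) = ⇑b ∘ ⇑σ := rfl
      rw [hps, AlternatingMap.map_perm, Units.smul_def, smul_comm] at hz0
      rcases Int.units_eq_one_or (Equiv.Perm.sign σ) with h1 | h1 <;> rw [h1] at hz0
      · simp only [Units.val_one, one_smul] at hz0
        exact (smul_eq_zero.mp hz0).resolve_right hvol
      · simp only [Units.val_neg, Units.val_one, neg_smul, one_smul, neg_eq_zero] at hz0
        exact (smul_eq_zero.mp hz0).resolve_right hvol
    · exact Finsupp.notMem_support_iff.mp hmem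
  have : c = 0 := Finsupp.ext hcq
  rw [← hc, this]
  simp

end Aux


/-- For every `g ∈ GU(V,H)` with similitude factor `ν`, the semilinear map `L`
satisfies `L ∘ ⋀²g = (ν² · (det g)⁻¹) · (⋀²g ∘ L)` on `⋀²V`. -/
theorem L_commutation_with_exterior_square
    {F E : Type*} [Field F] [CharZero F] [Field E] [Algebra F E]
    (hquad : Module.finrank F E = 2)
    (ρ : E →+* E) (hρ_invol : ∀ a, ρ (ρ a) = a) (hρ_ne : ρ ≠ RingHom.id E)
    (hρ_fixF : ∀ c : F, ρ (algebraMap F E c) = algebraMap F E c)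
    (hρ_fixed_field : ∀ a : E, ρ a = a → ∃ c : F, algebraMap F E c = a)
    {V : Type*} [AddCommGroup V] [Module E V] [FiniteDimensional E V]
    (hV4 : Module.finrank E V = 4)
    (H : V → V → E)
    (H_add_left : ∀ x y z, H (x + y) z = H x z + H y z)
    (H_add_right : ∀ x y z, H x (y + z) = H x y + H x z)
    (H_smul : ∀ (a b : E) (x y : V), H (a • x) (b • y) = ρ a * H x y * b)
    (H_conj : ∀ x y, H x y = ρ (H y x))
    (H_nondeg : ∀ x, (∀ y, H x y = 0) → x = 0)
    (d : (⋀[E]^4 V) ≃ₗ[E] E)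
    (h₂ : (⋀[E]^2 V) → (⋀[E]^2 V) → E) (hh₂ : IsDetForm ρ H 2 h₂)
    (L : (⋀[E]^2 V) → (⋀[E]^2 V))
    (L_add : ∀ x y, L (x + y) = L x + L y)
    (L_smul : ∀ (a : E) (x : ⋀[E]^2 V), L (a • x) = ρ a • L x)
    (L_def : ∀ x y : ⋀[E]^2 V, d (wedgeMul E (L x) y) = h₂ x y)
    (g : V ≃ₗ[E] V) (ν : F) (hν : ν ≠ 0)
    (hg : ∀ x y, H (g x) (g y) = algebraMap F E ν * H x y)
    (Λg : (⋀[E]^2 V) →ₗ[E] (⋀[E]^2 V))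
    (hΛg : ∀ v : Fin 2 → V, Λg (wedgeι E 2 v) = wedgeι E 2 (⇑g ∘ v)) :
    ∀ x : ⋀[E]^2 V,
      L (Λg x) = (algebraMap F E ν ^ 2 * (LinearMap.det (g : V →ₗ[E] V))⁻¹) • Λg (L x) := by
  classical
  obtain ⟨h2al, h2ar, h2sm, h2cj, h2det⟩ := hh₂
  set νE : E := algebraMap F E ν with hνE
  set detg : E := LinearMap.det (g : V →ₗ[E] V) with hdetg
  have hdetg0 : detg ≠ 0 := g.isUnit_det'.ne_zero
  let b : Module.Basis (Fin 4) E V := Module.finBasisOfFinrankEq E V hV4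
  -- the volume element is nonzero
  have hvol : (ExteriorAlgebra.ιMulti E 4 ⇑b : ExteriorAlgebra E V) ≠ 0 := by
    intro hv
    have hall : ∀ x : ⋀[E]^4 V, x = 0 := by
      refine wedge_ind 4 rfl (fun x y hx hy => by rw [hx, hy, add_zero])
        (fun a x hx => by rw [hx, smul_zero]) (fun v => ?_)
      refine Subtype.ext ?_
      show (ExteriorAlgebra.ιMulti E 4 v : ExteriorAlgebra E V) = 0
      rw [alt_expand b (ExteriorAlgebra.ιMulti E 4) v, hv, smul_zero]
    have h1 : (1 : E) = d (d.symm 1) := (d.apply_symm_apply 1).symm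
    rw [hall (d.symm 1)] at h1
    exact one_ne_zero (h1.trans d.map_zero)
  -- basic properties of h₂
  have h2zl : ∀ y, h₂ 0 y = 0 := fun y => by
    have h := h2al 0 0 y
    rw [add_zero] at h
    exact (left_eq_add.mp h)
  have h2zr : ∀ x, h₂ x 0 = 0 := fun x => by
    have h := h2ar x 0 0
    rw [add_zero] at h
    exact (left_eq_add.mp h)
  have h2sl : ∀ (a : E) x y, h₂ (a • x) y = ρ a * h₂ x y := fun a x y => by
    have h := h2sm a 1 x y
    rwa [one_smul, mul_one] at h
  have h2sr : ∀ (a : E) x y, h₂ x (a • y) = h₂ x y * a := fun a x y => by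
    have h := h2sm 1 a x y
    rwa [one_smul, map_one, one_mul] at h
  -- similitude property of h₂
  have h2sim : ∀ x y, h₂ (Λg x) (Λg y) = νE ^ 2 * h₂ x y := by
    refine fun x => wedge_ind 2
      (p := fun x => ∀ y, h₂ (Λg x) (Λg y) = νE ^ 2 * h₂ x y) ?_ ?_ ?_ ?_ x
    · intro y; rw [map_zero, h2zl, h2zl, mul_zero]
    · intro x1 x2 ih1 ih2 y; rw [map_add, h2al, h2al, ih1, ih2, mul_add]
    · intro a x1 ih y; rw [map_smul, h2sl, h2sl, ih]; ring
    · intro v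
      refine fun y => wedge_ind 2
        (p := fun y => h₂ (Λg (wedgeι E 2 v)) (Λg y)
          = νE ^ 2 * h₂ (wedgeι E 2 v) y) ?_ ?_ ?_ ?_ y
      · show h₂ (Λg (wedgeι E 2 v)) (Λg 0) = νE ^ 2 * h₂ (wedgeι E 2 v) 0
        rw [map_zero, h2zr, h2zr, mul_zero]
      · intro y1 y2 ih1 ih2; rw [map_add, h2ar, h2ar, ih1, ih2, mul_add]
      · intro a y1 ih; rw [map_smul, h2sr, h2sr, ih]; ring
      · intro w
        rw [hΛg, hΛg, h2det, h2det]
        have hmat : (Matrix.of fun i j => H ((⇑g ∘ v) i) ((⇑g ∘ w) j))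
            = νE • Matrix.of fun i j => H (v i) (w j) := by
          ext i j
          simp only [Matrix.smul_apply, Matrix.of_apply, Function.comp_apply, smul_eq_mul]
          rw [hg, hνE]
        rw [hmat, Matrix.det_smul, Fintype.card_fin, sq]
  -- Λg is the restriction of the algebra map induced by g
  have hΛval : ∀ x : ⋀[E]^2 V, ((Λg x : ⋀[E]^2 V) : ExteriorAlgebra E V)
      = ExteriorAlgebra.map (g : V →ₗ[E] V) (x : ExteriorAlgebra E V) := by
    refine fun x => wedge_ind 2
      (p := fun x => ((Λg x : ⋀[E]^2 V) : ExteriorAlgebra E V)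
        = ExteriorAlgebra.map (g : V →ₗ[E] V) (x : ExteriorAlgebra E V)) ?_ ?_ ?_ ?_ x
    · show ((Λg 0 : ⋀[E]^2 V) : ExteriorAlgebra E V)
        = ExteriorAlgebra.map (g : V →ₗ[E] V) ((0 : ⋀[E]^2 V) : ExteriorAlgebra E V)
      rw [map_zero]; simp
    · intro x1 x2 ih1 ih2
      rw [map_add, Submodule.coe_add, Submodule.coe_add, map_add, ih1, ih2]
    · intro a x1 ih
      rw [map_smul, Submodule.coe_smul, Submodule.coe_smul, map_smul, ih]
    · intro v
      rw [hΛg]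
      show (ExteriorAlgebra.ιMulti E 2 (⇑g ∘ v) : ExteriorAlgebra E V)
        = ExteriorAlgebra.map (g : V →ₗ[E] V) (ExteriorAlgebra.ιMulti E 2 v)
      rw [ExteriorAlgebra.map_apply_ιMulti]
      rfl
  -- the induced algebra map acts on ⋀⁴ by detg
  have map4 : ∀ z ∈ ⋀[E]^4 V,
      ExteriorAlgebra.map (g : V →ₗ[E] V) z = detg • z := by
    intro z hz
    rw [← ExteriorAlgebra.ιMulti_span_fixedDegree] at hz
    induction hz using Submodule.span_induction with
    | mem a ha =>
      obtain ⟨u, rfl⟩ := ha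
      rw [ExteriorAlgebra.map_apply_ιMulti]
      exact map_top_pow b _ u
    | zero => simp
    | add x y hx hy ihx ihy => rw [map_add, ihx, ihy, smul_add]
    | smul a x hx ih => rw [map_smul, ih, smul_comm]
  have hwm : ∀ x y : ⋀[E]^2 V,
      wedgeMul E (Λg x) (Λg y) = detg • wedgeMul E x y := by
    intro x y
    apply Subtype.ext
    show ((Λg x : ⋀[E]^2 V) : ExteriorAlgebra E V) * ((Λg y : ⋀[E]^2 V) : ExteriorAlgebra E V)
      = detg • (((x : ExteriorAlgebra E V)) * (y : ExteriorAlgebra E V))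
    rw [hΛval, hΛval, ← map_mul]
    exact map4 _ (wedgeMul E x y).2
  -- Λg is surjective
  have hsurj : ∀ y : ⋀[E]^2 V, ∃ y', Λg y' = y := by
    refine fun y => wedge_ind 2 (p := fun y => ∃ y', Λg y' = y)
      ⟨0, map_zero _⟩ ?_ ?_ ?_ y
    · rintro x1 y1 ⟨x', rfl⟩ ⟨y', rfl⟩; exact ⟨x' + y', map_add _ _ _⟩
    · rintro a x1 ⟨x', rfl⟩; exact ⟨a • x', map_smul _ _ _⟩
    · intro v
      refine ⟨wedgeι E 2 (⇑g.symm ∘ v), ?_⟩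
      rw [hΛg]
      congr 1
      funext i
      exact g.apply_symm_apply (v i)
  -- final computation
  intro x
  set c : E := νE ^ 2 * detg⁻¹ with hc
  have hz0 : ∀ y : ⋀[E]^2 V, wedgeMul E (L (Λg x) - c • Λg (L x)) y = 0 := by
    intro y
    obtain ⟨y', rfl⟩ := hsurj y
    have hsplit : wedgeMul E (L (Λg x) - c • Λg (L x)) (Λg y')
        = wedgeMul E (L (Λg x)) (Λg y') - c • wedgeMul E (Λg (L x)) (Λg y') := by
      apply Subtype.ext
      show ((L (Λg x) : ⋀[E]^2 V) - c • Λg (L x) : ⋀[E]^2 V).val * _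
        = (L (Λg x) : ⋀[E]^2 V).val * _ - c • ((Λg (L x) : ⋀[E]^2 V).val * _)
      rw [Submodule.coe_sub, Submodule.coe_smul, sub_mul, smul_mul_assoc]
    have dsub : ∀ u v : ⋀[E]^4 V, d (u - v) = d u - d v := fun u v =>
      d.toLinearMap.map_sub u v
    have dsmul : ∀ (a : E) (u : ⋀[E]^4 V), d (a • u) = a • d u := fun a u =>
      d.toLinearMap.map_smul a u
    have hd : d (wedgeMul E (L (Λg x) - c • Λg (L x)) (Λg y')) = 0 := by
      rw [hsplit, dsub, L_def, h2sim, dsmul, hwm, dsmul, L_def]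
      rw [smul_eq_mul, smul_eq_mul, hc]
      field_simp
      ring
    have := hd
    rwa [LinearEquiv.map_eq_zero_iff] at this
  have hzero : L (Λg x) - c • Λg (L x) = 0 := by
    refine Subtype.ext ?_
    refine wedge_pairing_nondeg b hvol _ (L (Λg x) - c • Λg (L x)).2 fun v => ?_
    exact congrArg Subtype.val (hz0 (wedgeι E 2 v))
  rw [sub_eq_zero] at hzero
  exact hzero
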